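/- If v is a continuous weight on G whose zero set G \ E_v is discrete in G, then H^∞_v(G) is a Banach space. -/

import Mathlib

open Complex Metric Set Filter Topology MeasureTheory

noncomputable section

/-- `f` is holomorphic on `G` and `sup_{z in G} v z * |f z| < ∞`. -/
def MemHv (G : Set ℂ) (v : ℂ → ℝ) (f : ℂ → ℂ) : Prop :=
  DifferentiableOn ℂ f G ∧ ∃ C : ℝ, ∀ z ∈ G, v z * ‖f z‖ ≤ C

/-- The weighted sup-seminorm `‖f‖_v`. -/
def HvNorm (G : Set ℂ) (v : ℂ → ℝ) (f : ℂ → ℂ) : ℝ :=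
  sSup ((fun z => v z * ‖f z‖) '' G)

/-- A `‖·‖_v`-Cauchy sequence. -/
def HvCauchy (G : Set ℂ) (v : ℂ → ℝ) (F : ℕ → ℂ → ℂ) : Prop :=
  ∀ ε : ℝ, 0 < ε → ∃ N : ℕ, ∀ m ≥ N, ∀ n ≥ N, ∀ z ∈ G,
    v z * ‖F m z - F n z‖ ≤ ε

/-- Convergence in the `‖·‖_v`-seminorm. -/
def HvTendsto (G : Set ℂ) (v : ℂ → ℝ) (F : ℕ → ℂ → ℂ) (f : ℂ → ℂ) : Prop :=
  ∀ ε : ℝ, 0 < ε → ∃ N : ℕ, ∀ n ≥ N, ∀ z ∈ G,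
    v z * ‖F n z - f z‖ ≤ ε

/-- Completeness of `H^∞_v(G)`: every Cauchy sequence converges in the space. -/
def HvComplete (G : Set ℂ) (v : ℂ → ℝ) : Prop :=
  ∀ F : ℕ → ℂ → ℂ, (∀ n, MemHv G v (F n)) → HvCauchy G v F →
    ∃ f : ℂ → ℂ, MemHv G v f ∧ HvTendsto G v F f

/-- The seminorm `‖·‖_v` is a norm: `‖f‖_v = 0` forces `f = 0` on `G`. -/
def HvNormed (G : Set ℂ) (v : ℂ → ℝ) : Prop :=
  ∀ f : ℂ → ℂ, MemHv G v f → (∀ z ∈ G, v z * ‖f z‖ = 0) →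
    ∀ z ∈ G, f z = 0

/-- `H^∞_v(G)` is a Banach space. -/
def IsBanachHv (G : Set ℂ) (v : ℂ → ℝ) : Prop :=
  HvNormed G v ∧ HvComplete G v

/-- Around any point of `G` there is a closed disk inside `G` on which `v` is
positive except possibly at the center. -/
lemma aux_disk (G : Set ℂ) (v : ℂ → ℝ) (hG : IsOpen G) (hv : ∀ z ∈ G, 0 ≤ v z)
    (hdisc : ∀ z ∈ G, ¬ AccPt z (𝓟 {w ∈ G | v w = 0})) {z₀ : ℂ} (hz₀ : z₀ ∈ G) :
    ∃ r > (0:ℝ), closedBall z₀ r ⊆ G ∧ ∀ w ∈ closedBall z₀ r, w ≠ z₀ → 0 < v w := by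
  have h := hdisc z₀ hz₀
  rw [accPt_iff_nhds] at h
  push_neg at h
  obtain ⟨U, hU, hUz⟩ := h
  have hUG : U ∩ G ∈ 𝓝 z₀ := Filter.inter_mem hU (hG.mem_nhds hz₀)
  obtain ⟨r, hr, hball⟩ := Metric.mem_nhds_iff.mp hUG
  refine ⟨r / 2, by linarith, ?_, ?_⟩
  · intro w hw
    exact (hball (lt_of_le_of_lt (mem_closedBall.mp hw) (by linarith))).2
  · intro w hw hne
    have hwU : w ∈ U ∩ G := hball (lt_of_le_of_lt (mem_closedBall.mp hw) (by linarith))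
    rcases lt_or_eq_of_le (hv w hwU.2) with h | h
    · exact h
    · exact absurd (hUz w ⟨hwU.1, hwU.2, h.symm⟩) hne

/-- A `‖·‖_v`-Cauchy sequence is uniformly Cauchy on a closed disk around each
point of `G`, by the maximum modulus principle. -/
lemma aux_ucauchy (G : Set ℂ) (v : ℂ → ℝ) (hG : IsOpen G)
    (hv : ∀ z ∈ G, 0 ≤ v z) (hvc : ContinuousOn v G)
    (hdisc : ∀ z ∈ G, ¬ AccPt z (𝓟 {w ∈ G | v w = 0}))
    (F : ℕ → ℂ → ℂ) (hF : ∀ n, MemHv G v (F n)) (hFc : HvCauchy G v F)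
    {z₀ : ℂ} (hz₀ : z₀ ∈ G) :
    ∃ r > (0:ℝ), closedBall z₀ r ⊆ G ∧ ∀ ε > (0:ℝ), ∃ N : ℕ, ∀ m ≥ N, ∀ n ≥ N,
      ∀ w ∈ closedBall z₀ r, ‖F m w - F n w‖ ≤ ε := by
  obtain ⟨r, hr, hsub, hpos⟩ := aux_disk G v hG hv hdisc hz₀
  refine ⟨r, hr, hsub, ?_⟩
  have hsph : sphere z₀ r ⊆ G := fun w hw => hsub (sphere_subset_closedBall hw)
  have hne : (sphere z₀ r).Nonempty := NormedSpace.sphere_nonempty.mpr hr.le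
  obtain ⟨w₀, hw₀, hmin⟩ := (isCompact_sphere z₀ r).exists_isMinOn hne (hvc.mono hsph)
  set c := v w₀ with hc
  have hcpos : 0 < c := hpos w₀ (sphere_subset_closedBall hw₀)
    (fun h => by simp [h, mem_sphere_iff_norm] at hw₀; exact hr.ne' hw₀.symm)
  intro ε hε
  obtain ⟨N, hN⟩ := hFc (ε * c) (mul_pos hε hcpos)
  refine ⟨N, fun m hm n hn w hw => ?_⟩
  -- bound on the sphere
  have hbd : ∀ x ∈ frontier (ball z₀ r), ‖F m x - F n x‖ ≤ ε := by
    intro x hx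
    rw [frontier_ball z₀ hr.ne'] at hx
    have hxG : x ∈ G := hsph hx
    have hvx : c ≤ v x := hmin hx
    have h1 : v x * ‖F m x - F n x‖ ≤ ε * c := hN m hm n hn x hxG
    have h2 : c * ‖F m x - F n x‖ ≤ ε * c := by
      calc c * ‖F m x - F n x‖
          ≤ v x * ‖F m x - F n x‖ :=
            mul_le_mul_of_nonneg_right hvx (norm_nonneg _)
        _ ≤ ε * c := h1
    nlinarith [h2, hcpos]
  have hdiff : DiffContOnCl ℂ (fun x => F m x - F n x) (ball z₀ r) := by
    apply DifferentiableOn.diffContOnCl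
    rw [closure_ball z₀ hr.ne']
    exact ((hF m).1.mono hsub).sub ((hF n).1.mono hsub)
  have := Complex.norm_le_of_forall_mem_frontier_norm_le (isBounded_ball) hdiff hbd
    (by rw [closure_ball z₀ hr.ne']; exact hw)
  exact this

theorem stmt14 (G : Set ℂ) (v : ℂ → ℝ) (hG : IsOpen G) (hGc : IsConnected G)
    (hv : ∀ z ∈ G, 0 ≤ v z) (hvc : ContinuousOn v G)
    (hdisc : ∀ z ∈ G, ¬ AccPt z (𝓟 {w ∈ G | v w = 0})) :
    IsBanachHv G v := by
  constructor
  · -- Normed: identity theorem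
    intro f hf hzero
    obtain ⟨z₀, hz₀⟩ := hGc.nonempty
    have han : AnalyticOnNhd ℂ f G := hf.1.analyticOnNhd hG
    have hfreq : ∃ᶠ z in 𝓝[≠] z₀, f z = 0 := by
      apply Filter.Eventually.frequently
      obtain ⟨r, hr, hsub, hpos⟩ := aux_disk G v hG hv hdisc hz₀
      have hball : ∀ᶠ z in 𝓝 z₀, z ∈ closedBall z₀ r :=
        closedBall_mem_nhds z₀ hr
      filter_upwards [eventually_nhdsWithin_of_eventually_nhds hball,
        self_mem_nhdsWithin] with z hz hz'
      have hzG : z ∈ G := hsub hz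
      have hvz : 0 < v z := hpos z hz hz'
      have := hzero z hzG
      have : ‖f z‖ = 0 := by
        rcases mul_eq_zero.mp this with h | h
        · exact absurd h hvz.ne'
        · exact h
      exact norm_eq_zero.mp this
    exact fun z hz =>
      han.eqOn_zero_of_preconnected_of_frequently_eq_zero hGc.isPreconnected hz₀ hfreq hz
  · -- Complete
    intro F hF hFc
    set f : ℂ → ℂ := fun z => limUnder atTop (fun n => F n z) with hfdef
    -- pointwise convergence
    have htends : ∀ z ∈ G, Tendsto (fun n => F n z) atTop (𝓝 (f z)) := by
      intro z hz
      obtain ⟨r, hr, hsub, huc⟩ := aux_ucauchy G v hG hv hvc hdisc F hF hFc hz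
      have hcs : CauchySeq (fun n => F n z) := by
        rw [Metric.cauchySeq_iff]
        intro ε hε
        obtain ⟨N, hN⟩ := huc (ε / 2) (by linarith)
        refine ⟨N, fun m hm n hn => ?_⟩
        have := hN m hm n hn z (mem_closedBall_self hr.le)
        calc dist (F m z) (F n z) = ‖F m z - F n z‖ := by
              rw [Complex.dist_eq]
          _ ≤ ε / 2 := this
          _ < ε := by linarith
      obtain ⟨l, hl⟩ := cauchySeq_tendsto_of_complete hcs
      have : f z = l := hl.limUnder_eq
      rw [this]; exact hl
    -- HvTendsto
    have hvt : HvTendsto G v F f := by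
      intro ε hε
      obtain ⟨N, hN⟩ := hFc (ε / 2) (by linarith)
      refine ⟨N, fun n hn z hz => ?_⟩
      have htd : Tendsto (fun m => v z * ‖F n z - F m z‖) atTop
          (𝓝 (v z * ‖F n z - f z‖)) := by
        apply Tendsto.const_mul
        exact (continuous_norm.tendsto _).comp
          ((tendsto_const_nhds.sub (htends z hz)))
      have hle : ∀ᶠ m in atTop, v z * ‖F n z - F m z‖ ≤ ε / 2 :=
        eventually_atTop.mpr ⟨N, fun m hm => hN n hn m hm z hz⟩
      linarith [le_of_tendsto htd hle]
    -- local uniform convergence and differentiability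
    have hlu : TendstoLocallyUniformlyOn F f atTop G := by
      rw [Metric.tendstoLocallyUniformlyOn_iff]
      intro ε hε x hx
      obtain ⟨r, hr, hsub, huc⟩ := aux_ucauchy G v hG hv hvc hdisc F hF hFc hx
      refine ⟨closedBall x r ∩ G,
        Filter.inter_mem (mem_nhdsWithin_of_mem_nhds (closedBall_mem_nhds x hr))
          self_mem_nhdsWithin, ?_⟩
      obtain ⟨N, hN⟩ := huc (ε / 2) (by linarith)
      refine eventually_atTop.mpr ⟨N, fun n hn y hy => ?_⟩
      have htd : Tendsto (fun m => dist (F m y) (F n y)) atTop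
          (𝓝 (dist (f y) (F n y))) := (htends y hy.2).dist tendsto_const_nhds
      have hle : ∀ᶠ m in atTop, dist (F m y) (F n y) ≤ ε / 2 :=
        eventually_atTop.mpr ⟨N, fun m hm => by
          rw [Complex.dist_eq]; exact hN m hm n hn y hy.1⟩
      have := le_of_tendsto htd hle
      linarith
    have hdf : DifferentiableOn ℂ f G :=
      hlu.differentiableOn (Filter.Eventually.of_forall fun n => (hF n).1) hG
    -- boundedness
    obtain ⟨N, hN⟩ := hvt 1 one_pos
    obtain ⟨_, C, hCb⟩ := hF N
    refine ⟨f, ⟨hdf, C + 1, fun z hz => ?_⟩, hvt⟩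
    have h1 : ‖f z‖ ≤ ‖F N z‖ + ‖F N z - f z‖ := by
      calc ‖f z‖ = ‖F N z + (f z - F N z)‖ := by ring_nf
        _ ≤ ‖F N z‖ + ‖f z - F N z‖ := norm_add_le _ _
        _ = ‖F N z‖ + ‖F N z - f z‖ := by
              rw [norm_sub_rev]
    calc v z * ‖f z‖
        ≤ v z * (‖F N z‖ + ‖F N z - f z‖) :=
          mul_le_mul_of_nonneg_left h1 (hv z hz)
      _ = v z * ‖F N z‖ + v z * ‖F N z - f z‖ := mul_add _ _ _
      _ ≤ C + 1 := add_le_add (hCb z hz) (hN N (le_refl N) z hz)
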